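/- Let n ≥ 1 and let A_n denote the alternating group of even permutations of Fin n. For every λ : Fin n → ℝ and every m : Fin n → ℕ, ∫_{x : Fin n → ℝ} Ê_λ(x) · exp(−π ∑_i (x i)²) · ∏_i He_{m i}(2√π · x i) dx = i^{∑_i m i} · exp(−π ∑_i (λ i)²) · ∑_{σ ∈ A_n} ∏_i He_{m (σ i)}(2√π · λ i), where the integral is over ℝ^n with Lebesgue measure. That is, applying the E-orbit function transform to a product of Hermite functions produces the A_n-symmetrized Hermite polynomial ℋ_m times the Gaussian, with eigenvalue factor i^{|m|}. -/

import Mathlib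

/-- The normalized `E`-orbit function
`Ê_λ(x) = ∑_{σ ∈ Aₙ} exp(2πi ∑ᵢ λ(σ⁻¹ i) · x i)`. -/
noncomputable def Ehat (n : ℕ) (lam x : Fin n → ℝ) : ℂ :=
  ∑ σ : alternatingGroup (Fin n),
    Complex.exp (2 * (Real.pi : ℂ) * Complex.I *
      ((∑ i, lam ((σ : Equiv.Perm (Fin n))⁻¹ i) * x i : ℝ) : ℂ))

open MeasureTheory FourierTransform Polynomial Complex

namespace EhatAux

noncomputable def cc : ℝ := 2 * Real.sqrt Real.pi

lemma cc_pos : 0 < cc := by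
  have := Real.sqrt_pos.mpr Real.pi_pos
  unfold cc; linarith

lemma cc_sq : (cc : ℂ) ^ 2 = 4 * (Real.pi : ℂ) := by
  have h : (cc : ℝ) ^ 2 = 4 * Real.pi := by
    rw [cc, mul_pow, Real.sq_sqrt Real.pi_pos.le]; norm_num
  calc (cc : ℂ) ^ 2 = ((cc ^ 2 : ℝ) : ℂ) := by push_cast; ring
    _ = 4 * (Real.pi : ℂ) := by rw [h]; push_cast; ring

noncomputable def g (k : ℕ) (z : ℂ) : ℂ :=
  aeval ((cc : ℂ) * z) (hermite k) * Complex.exp (-(Real.pi : ℂ) * z ^ 2)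

noncomputable def Dg (k : ℕ) (z : ℂ) : ℂ :=
  ((cc : ℂ) * aeval ((cc : ℂ) * z) (derivative (hermite k))
    - 2 * (Real.pi : ℂ) * z * aeval ((cc : ℂ) * z) (hermite k)) *
    Complex.exp (-(Real.pi : ℂ) * z ^ 2)

lemma hasDerivAt_g (k : ℕ) (z : ℂ) : HasDerivAt (g k) (Dg k z) z := by
  have h1 : HasDerivAt (fun z : ℂ => aeval ((cc : ℂ) * z) (hermite k))
      ((aeval ((cc : ℂ) * z) (derivative (hermite k))) * (cc : ℂ)) z := by
    have hp := Polynomial.hasDerivAt_aeval (q := hermite k) ((cc : ℂ) * z)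
    have hl : HasDerivAt (fun z : ℂ => (cc : ℂ) * z) (cc : ℂ) z := by
      simpa using (hasDerivAt_id z).const_mul (cc : ℂ)
    exact hp.comp z hl
  have h2 : HasDerivAt (fun z : ℂ => Complex.exp (-(Real.pi : ℂ) * z ^ 2))
      (Complex.exp (-(Real.pi : ℂ) * z ^ 2) * (-(Real.pi : ℂ) * (2 * z))) z := by
    have := ((hasDerivAt_pow 2 z).const_mul (-(Real.pi : ℂ))).cexp
    simpa using this
  have := h1.mul h2
  exact this.congr_deriv (by unfold Dg; ring)

lemma integrable_pg (j : ℕ) :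
    Integrable (fun x : ℝ => x ^ j * Real.exp (-Real.pi * x ^ 2)) := by
  have h : (-1 : ℝ) < (j : ℝ) := lt_of_lt_of_le (by norm_num) (Nat.cast_nonneg j)
  simpa [Real.rpow_natCast] using
    integrable_rpow_mul_exp_neg_mul_sq Real.pi_pos (s := (j : ℝ)) h

lemma integrable_aux (p : Polynomial ℤ) (j : ℕ) :
    Integrable fun x : ℝ =>
      (x : ℂ) ^ j * aeval ((cc : ℂ) * x) p * Complex.exp (-(Real.pi : ℂ) * x ^ 2) := by
  have key : (fun x : ℝ =>
      (x : ℂ) ^ j * aeval ((cc : ℂ) * x) p * Complex.exp (-(Real.pi : ℂ) * x ^ 2))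
      = fun x : ℝ => ∑ i ∈ Finset.range (p.natDegree + 1),
          ((p.coeff i : ℂ) * (cc : ℂ) ^ i) *
            ((x ^ (j + i) * Real.exp (-Real.pi * x ^ 2) : ℝ) : ℂ) := by
    funext x
    have he : Complex.exp (-(Real.pi : ℂ) * (x : ℂ) ^ 2)
        = ((Real.exp (-Real.pi * x ^ 2) : ℝ) : ℂ) := by
      rw [Complex.ofReal_exp]; push_cast; ring_nf
    rw [Polynomial.aeval_eq_sum_range, Finset.mul_sum, Finset.sum_mul]
    refine Finset.sum_congr rfl fun i _ => ?_
    rw [he]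
    push_cast [zsmul_eq_mul]
    ring
  rw [key]
  exact integrable_finset_sum _ fun i _ =>
    ((integrable_pg (j + i)).ofReal.const_mul _)

lemma integrable_char_mul {f : ℝ → ℂ} {r : ℝ → ℝ} (hf : Integrable f) (hr : Continuous r) :
    Integrable fun x : ℝ => Complex.exp (((r x : ℝ) : ℂ) * I) * f x := by
  apply hf.bdd_mul (c := 1)
  · exact ((Complex.continuous_ofReal.comp hr).mul
      continuous_const).cexp.aestronglyMeasurable
  · exact ae_of_all _ fun x => le_of_eq (by simp [Complex.norm_exp])

lemma fourier_const_mul (f : ℝ → ℂ) (a : ℂ) (w : ℝ) :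
    𝓕 (fun x => a * f x) w = a * 𝓕 f w := by
  simp_rw [Real.fourier_real_eq_integral_exp_smul, smul_eq_mul, mul_left_comm _ a]
  exact integral_const_mul a _

lemma fourier_sub_lin {f h : ℝ → ℂ} (hf : Integrable f) (hh : Integrable h) (a : ℂ) (w : ℝ) :
    𝓕 (fun x => a * f x - h x) w = a * 𝓕 f w - 𝓕 h w := by
  simp_rw [Real.fourier_real_eq_integral_exp_smul, smul_eq_mul, mul_sub,
    mul_left_comm _ a]
  rw [integral_sub (((integrable_char_mul hf (by continuity)).const_mul a)) 
    (integrable_char_mul hh (by continuity)), integral_const_mul]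

lemma fourier_g : ∀ k : ℕ, 𝓕 (fun x : ℝ => g k x) = fun w : ℝ => (-I) ^ k * g k w := by
  intro k
  induction k with
  | zero =>
    have h0 : (fun x : ℝ => g 0 x)
        = fun x : ℝ => Complex.exp (-(Real.pi : ℂ) * 1 * (x : ℂ) ^ 2) := by
      funext x; simp [g, Polynomial.hermite_zero]
    rw [h0, fourier_gaussian_pi (by norm_num : 0 < (1 : ℂ).re)]
    funext w
    simp [g, Polynomial.hermite_zero]
  | succ k IH =>
    have hA : Integrable (fun x : ℝ => g k x) := by
      have := integrable_aux (hermite k) 0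
      simpa [g] using this
    have hB : Integrable (fun x : ℝ => (x : ℝ) • g k (x : ℂ)) := by
      have := integrable_aux (hermite k) 1
      apply this.congr
      filter_upwards with x
      simp [g, Complex.real_smul]; ring
    have hdiff : Differentiable ℝ (fun x : ℝ => g k x) := fun x =>
      ((hasDerivAt_g k x).comp_ofReal).differentiableAt
    have hderiv : deriv (fun x : ℝ => g k x) = fun x : ℝ => Dg k x :=
      funext fun x => ((hasDerivAt_g k x).comp_ofReal).deriv
    have hD : Integrable (fun x : ℝ => Dg k x) := by
      have h1 := (integrable_aux (derivative (hermite k)) 0).const_mul (cc : ℂ)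
      have h2 := (integrable_aux (hermite k) 1).const_mul (2 * (Real.pi : ℂ))
      apply (h1.sub h2).congr
      filter_upwards with x
      simp [Dg]; ring
    have hFd : ∀ w : ℝ, 𝓕 (fun x : ℝ => Dg k x) w
        = (2 * (Real.pi : ℂ) * I * w) * ((-I) ^ k * g k w) := by
      intro w
      have h := Real.fourier_deriv hA hdiff (hderiv ▸ hD)
      rw [← hderiv]
      rw [congrFun h w, IH]
      simp only [smul_eq_mul]
    have hasF : ∀ w : ℝ, 𝓕 (fun x : ℝ => (-2 * (Real.pi : ℂ) * I * x) • g k x) w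
        = (-I) ^ k * Dg k w := by
      intro w
      have h1 := Real.hasDerivAt_fourier hA hB w
      rw [IH] at h1
      have h2 : HasDerivAt (fun w : ℝ => (-I : ℂ) ^ k * g k w) ((-I) ^ k * Dg k w) w :=
        ((hasDerivAt_g k w).comp_ofReal).const_mul _
      exact (h1.unique h2)
    have hrec : ∀ z : ℂ, (cc : ℂ) * g (k + 1) z
        = 2 * (Real.pi : ℂ) * z * g k z - Dg k z := by
      intro z
      simp only [g, Dg, hermite_succ, map_sub, map_mul, aeval_X]
      linear_combination (z * (aeval ((cc : ℂ) * z) (hermite k)) *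
        Complex.exp (-(Real.pi : ℂ) * z ^ 2)) * cc_sq
    have hcomb : (fun x : ℝ => (cc : ℂ) * g (k + 1) x)
        = fun x : ℝ => I * ((-2 * (Real.pi : ℂ) * I * x) • g k x) - Dg k x := by
      funext x
      rw [hrec (x : ℂ)]
      simp only [smul_eq_mul]
      linear_combination (2 * (Real.pi : ℂ) * x * (g k x)) * Complex.I_sq
    have hInt1 : Integrable (fun x : ℝ => (-2 * (Real.pi : ℂ) * I * x) • g k x) := by
      apply (hB.const_mul (-2 * (Real.pi : ℂ) * I)).congr
      filter_upwards with x
      simp [Complex.real_smul, smul_eq_mul]; ring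
    funext w
    have hc0 : (cc : ℂ) ≠ 0 := by
      simpa using ne_of_gt cc_pos
    apply mul_left_cancel₀ hc0
    calc (cc : ℂ) * 𝓕 (fun x : ℝ => g (k + 1) x) w
        = 𝓕 (fun x : ℝ => (cc : ℂ) * g (k + 1) x) w := (fourier_const_mul _ _ _).symm
      _ = 𝓕 (fun x : ℝ => I * ((-2 * (Real.pi : ℂ) * I * x) • g k x) - Dg k x) w := by
          rw [hcomb]
      _ = I * 𝓕 (fun x : ℝ => (-2 * (Real.pi : ℂ) * I * x) • g k x) w
            - 𝓕 (fun x : ℝ => Dg k x) w := fourier_sub_lin hInt1 hD I w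
      _ = I * ((-I) ^ k * Dg k w) - (2 * (Real.pi : ℂ) * I * w) * ((-I) ^ k * g k w) := by
          rw [hasF w, hFd w]
      _ = (cc : ℂ) * ((-I) ^ (k + 1) * g (k + 1) w) := by
          rw [pow_succ]
          linear_combination (I * (-I : ℂ) ^ k) * hrec (w : ℂ)


lemma coe_aeval (x : ℝ) (p : Polynomial ℤ) :
    ((Polynomial.aeval x p : ℝ) : ℂ) = Polynomial.aeval (x : ℂ) p := by
  have := Polynomial.aeval_algHom_apply Complex.ofRealHom.toIntAlgHom x p
  simpa using this.symm

lemma aeval_hermite_neg (k : ℕ) (z : ℂ) :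
    aeval (-z) (hermite k) = (-1) ^ k * aeval z (hermite k) := by
  rw [Polynomial.aeval_eq_sum_range (p := hermite k) (-z),
    Polynomial.aeval_eq_sum_range (p := hermite k) z, Finset.mul_sum]
  refine Finset.sum_congr rfl fun i _ => ?_
  by_cases h : (hermite k).coeff i = 0
  · simp [h]
  · have heven : Even (k + i) := by
      by_contra hodd
      exact h (coeff_hermite_of_odd_add (Nat.odd_iff.mpr (by
        rcases Nat.even_or_odd (k + i) with he | ho
        · exact absurd he hodd
        · exact Nat.odd_iff.mp ho)))
    have h1 : ((-1 : ℂ)) ^ (k + i) = 1 := heven.neg_one_pow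
    have h2 : ((-1 : ℂ)) ^ i = (-1) ^ k := by
      have hkk : ((-1 : ℂ)) ^ (k + k) = 1 := Even.neg_one_pow ⟨k, rfl⟩
      calc ((-1 : ℂ)) ^ i = (-1) ^ (k + k) * (-1) ^ i := by rw [hkk, one_mul]
        _ = (-1) ^ k * ((-1) ^ (k + i)) := by rw [← pow_add, ← pow_add]; ring_nf
        _ = (-1) ^ k := by rw [h1, mul_one]
    rw [zsmul_eq_mul, zsmul_eq_mul, neg_pow, h2]
    ring

lemma oneD (k : ℕ) (l : ℝ) :
    ∫ x : ℝ, Complex.exp (2 * (Real.pi : ℂ) * I * ((l * x : ℝ) : ℂ))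
        * ((Real.exp (-Real.pi * x ^ 2) : ℝ) : ℂ)
        * ((Polynomial.aeval (2 * Real.sqrt Real.pi * x) (hermite k) : ℝ) : ℂ)
      = I ^ k * ((Real.exp (-Real.pi * l ^ 2) : ℝ) : ℂ)
        * ((Polynomial.aeval (2 * Real.sqrt Real.pi * l) (hermite k) : ℝ) : ℂ) := by
  have h := congrFun (fourier_g k) (-l)
  rw [Real.fourier_real_eq_integral_exp_smul] at h
  have hint : (fun v : ℝ => Complex.exp (((-2 * Real.pi * v * (-l) : ℝ) : ℂ) * I) • g k v)
      = fun x : ℝ => Complex.exp (2 * (Real.pi : ℂ) * I * ((l * x : ℝ) : ℂ))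
        * ((Real.exp (-Real.pi * x ^ 2) : ℝ) : ℂ)
        * ((Polynomial.aeval (2 * Real.sqrt Real.pi * x) (hermite k) : ℝ) : ℂ) := by
    funext x
    have e1 : (((-2 * Real.pi * x * (-l) : ℝ) : ℂ) * I)
        = 2 * (Real.pi : ℂ) * I * ((l * x : ℝ) : ℂ) := by push_cast; ring
    have e2 : ((Polynomial.aeval (2 * Real.sqrt Real.pi * x) (hermite k) : ℝ) : ℂ)
        = aeval ((cc : ℂ) * x) (hermite k) := by
      rw [coe_aeval]; push_cast [cc]; ring_nf
    have e3 : ((Real.exp (-Real.pi * x ^ 2) : ℝ) : ℂ)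
        = Complex.exp (-(Real.pi : ℂ) * (x : ℂ) ^ 2) := by
      rw [Complex.ofReal_exp]; push_cast; ring_nf
    rw [smul_eq_mul, e1, e2, e3]
    unfold g; ring
  rw [hint] at h
  rw [h]
  have e4 : g k ((-l : ℝ) : ℂ) = (-1) ^ k * (aeval ((cc : ℂ) * l) (hermite k)
      * Complex.exp (-(Real.pi : ℂ) * (l : ℂ) ^ 2)) := by
    unfold g
    push_cast
    rw [show (cc : ℂ) * (-(l : ℂ)) = -((cc : ℂ) * l) by ring, aeval_hermite_neg]
    ring_nf
  rw [e4]
  have e2 : ((Polynomial.aeval (2 * Real.sqrt Real.pi * l) (hermite k) : ℝ) : ℂ)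
      = aeval ((cc : ℂ) * l) (hermite k) := by
    rw [coe_aeval]; push_cast [cc]; ring_nf
  have e3 : ((Real.exp (-Real.pi * l ^ 2) : ℝ) : ℂ)
      = Complex.exp (-(Real.pi : ℂ) * (l : ℂ) ^ 2) := by
    rw [Complex.ofReal_exp]; push_cast; ring_nf
  rw [e2, e3]
  have : ((-I : ℂ)) ^ k * (-1 : ℂ) ^ k = I ^ k := by
    rw [← mul_pow]; ring_nf
  linear_combination (aeval ((cc : ℂ) * l) (hermite k)
    * Complex.exp (-(Real.pi : ℂ) * (l : ℂ) ^ 2)) * this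


lemma integrable_term (a : ℝ) (k : ℕ) :
    Integrable fun y : ℝ => Complex.exp (2 * (Real.pi : ℂ) * I * ((a * y : ℝ) : ℂ))
      * ((Real.exp (-Real.pi * y ^ 2) : ℝ) : ℂ)
      * ((Polynomial.aeval (2 * Real.sqrt Real.pi * y) (hermite k) : ℝ) : ℂ) := by
  have base : Integrable fun y : ℝ => ((Real.exp (-Real.pi * y ^ 2) : ℝ) : ℂ)
      * ((Polynomial.aeval (2 * Real.sqrt Real.pi * y) (hermite k) : ℝ) : ℂ) := by
    apply (integrable_aux (hermite k) 0).congr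
    filter_upwards with y
    rw [coe_aeval, Complex.ofReal_exp]
    push_cast [cc]
    ring_nf
  apply (integrable_char_mul base (by continuity : Continuous fun y : ℝ => 2 * Real.pi * a * y)).congr
  filter_upwards with y
  have : (((2 * Real.pi * a * y : ℝ) : ℂ) * I)
      = 2 * (Real.pi : ℂ) * I * ((a * y : ℝ) : ℂ) := by push_cast; ring
  rw [this]; ring

lemma integral_prod_row (n : ℕ) (lam : Fin n → ℝ) (m : Fin n → ℕ) (τ : Equiv.Perm (Fin n)) :
    (∫ x : Fin n → ℝ, ∏ i, (Complex.exp (2 * (Real.pi : ℂ) * I * ((lam (τ⁻¹ i) * x i : ℝ) : ℂ))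
        * ((Real.exp (-Real.pi * (x i) ^ 2) : ℝ) : ℂ)
        * ((Polynomial.aeval (2 * Real.sqrt Real.pi * x i) (hermite (m i)) : ℝ) : ℂ)))
    = I ^ (∑ i, m i) * ((Real.exp (-Real.pi * ∑ i, lam i ^ 2) : ℝ) : ℂ) *
        ∏ i, ((Polynomial.aeval (2 * Real.sqrt Real.pi * lam i) (hermite (m (τ i))) : ℝ) : ℂ) := by
  rw [MeasureTheory.volume_pi]
  rw [MeasureTheory.integral_fintype_prod_eq_prod (ι := Fin n)
    (f := fun i y => Complex.exp (2 * (Real.pi : ℂ) * I * ((lam (τ⁻¹ i) * y : ℝ) : ℂ))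
      * ((Real.exp (-Real.pi * y ^ 2) : ℝ) : ℂ)
      * ((Polynomial.aeval (2 * Real.sqrt Real.pi * y) (hermite (m i)) : ℝ) : ℂ))]
  rw [Finset.prod_congr rfl (fun i _ => oneD (m i) (lam (τ⁻¹ i)))]
  rw [Finset.prod_mul_distrib, Finset.prod_mul_distrib, Finset.prod_pow_eq_pow_sum]
  congr 1
  · congr 1
    rw [← Complex.ofReal_prod, ← Real.exp_sum]
    congr 2
    rw [← Finset.mul_sum]
    congr 1
    exact Equiv.sum_comp τ⁻¹ (fun j => lam j ^ 2)
  · rw [← Equiv.prod_comp (τ : Equiv.Perm (Fin n))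
      (fun i => ((Polynomial.aeval (2 * Real.sqrt Real.pi * lam (τ⁻¹ i)) (hermite (m i)) : ℝ) : ℂ))]
    simp

end EhatAux


/-- Applying the `E`-orbit function transform to a product of Hermite functions gives
the `Aₙ`-symmetrized Hermite polynomial times the Gaussian, with eigenvalue factor
`i^{|m|}`. -/
theorem Ehat_hermite_transform (n : ℕ) (hn : 1 ≤ n) (lam : Fin n → ℝ) (m : Fin n → ℕ) :
    ∫ x : Fin n → ℝ,
        Ehat n lam x * ((Real.exp (-Real.pi * ∑ i, x i ^ 2) : ℝ) : ℂ) *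
          ((∏ i, (Polynomial.aeval (2 * Real.sqrt Real.pi * x i)
            (Polynomial.hermite (m i)) : ℝ) : ℝ) : ℂ) =
      Complex.I ^ (∑ i, m i) * ((Real.exp (-Real.pi * ∑ i, lam i ^ 2) : ℝ) : ℂ) *
        ∑ σ : alternatingGroup (Fin n),
          ((∏ i, (Polynomial.aeval (2 * Real.sqrt Real.pi * lam i)
            (Polynomial.hermite (m ((σ : Equiv.Perm (Fin n)) i))) : ℝ) : ℝ) : ℂ) := by
  classical
  have hsplit : ∀ x : Fin n → ℝ,
      Ehat n lam x * ((Real.exp (-Real.pi * ∑ i, x i ^ 2) : ℝ) : ℂ) *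
        ((∏ i, (Polynomial.aeval (2 * Real.sqrt Real.pi * x i)
          (Polynomial.hermite (m i)) : ℝ) : ℝ) : ℂ)
      = ∑ σ : alternatingGroup (Fin n), ∏ i,
          (Complex.exp (2 * (Real.pi : ℂ) * Complex.I *
              ((lam ((σ : Equiv.Perm (Fin n))⁻¹ i) * x i : ℝ) : ℂ))
            * ((Real.exp (-Real.pi * (x i) ^ 2) : ℝ) : ℂ)
            * ((Polynomial.aeval (2 * Real.sqrt Real.pi * x i)
              (Polynomial.hermite (m i)) : ℝ) : ℂ)) := by
    intro x
    unfold Ehat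
    rw [Finset.sum_mul, Finset.sum_mul]
    refine Finset.sum_congr rfl fun σ _ => ?_
    have e1 : (2 * (Real.pi : ℂ) * Complex.I *
        ((∑ i, lam ((σ : Equiv.Perm (Fin n))⁻¹ i) * x i : ℝ) : ℂ))
        = ∑ i, 2 * (Real.pi : ℂ) * Complex.I *
            ((lam ((σ : Equiv.Perm (Fin n))⁻¹ i) * x i : ℝ) : ℂ) := by
      push_cast
      rw [Finset.mul_sum]
    have e2 : ((Real.exp (-Real.pi * ∑ i, x i ^ 2) : ℝ) : ℂ)
        = ∏ i, ((Real.exp (-Real.pi * x i ^ 2) : ℝ) : ℂ) := by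
      rw [Finset.mul_sum, Real.exp_sum, Complex.ofReal_prod]
    have e3 : ((∏ i, (Polynomial.aeval (2 * Real.sqrt Real.pi * x i)
        (Polynomial.hermite (m i)) : ℝ) : ℝ) : ℂ)
        = ∏ i, ((Polynomial.aeval (2 * Real.sqrt Real.pi * x i)
            (Polynomial.hermite (m i)) : ℝ) : ℂ) :=
      Complex.ofReal_prod _ _
    rw [e1, Complex.exp_sum, e2, e3, ← Finset.prod_mul_distrib, ← Finset.prod_mul_distrib]
  rw [MeasureTheory.integral_congr_ae (MeasureTheory.ae_of_all _ hsplit)]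
  have hswap := MeasureTheory.integral_finset_sum (μ := (volume : MeasureTheory.Measure (Fin n → ℝ)))
    (Finset.univ) (f := fun (σ : alternatingGroup (Fin n)) (x : Fin n → ℝ) => ∏ i,
      (Complex.exp (2 * (Real.pi : ℂ) * Complex.I *
          ((lam ((σ : Equiv.Perm (Fin n))⁻¹ i) * x i : ℝ) : ℂ))
        * ((Real.exp (-Real.pi * (x i) ^ 2) : ℝ) : ℂ)
        * ((Polynomial.aeval (2 * Real.sqrt Real.pi * x i)
            (Polynomial.hermite (m i)) : ℝ) : ℂ)))
    (fun σ _ => MeasureTheory.Integrable.fintype_prod (f := fun i y =>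
      Complex.exp (2 * (Real.pi : ℂ) * Complex.I *
          ((lam ((σ : Equiv.Perm (Fin n))⁻¹ i) * y : ℝ) : ℂ))
        * ((Real.exp (-Real.pi * y ^ 2) : ℝ) : ℂ)
        * ((Polynomial.aeval (2 * Real.sqrt Real.pi * y)
            (Polynomial.hermite (m i)) : ℝ) : ℂ))
      (fun i => EhatAux.integrable_term (lam ((σ : Equiv.Perm (Fin n))⁻¹ i)) (m i)))
  rw [hswap]
  trans (∑ σ : alternatingGroup (Fin n),
    Complex.I ^ (∑ i, m i) * ((Real.exp (-Real.pi * ∑ i, lam i ^ 2) : ℝ) : ℂ) *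
      ∏ i, ((Polynomial.aeval (2 * Real.sqrt Real.pi * lam i)
        (Polynomial.hermite (m ((σ : Equiv.Perm (Fin n)) i))) : ℝ) : ℂ))
  · exact Finset.sum_congr rfl
      (fun σ _ => EhatAux.integral_prod_row n lam m (σ : Equiv.Perm (Fin n)))
  · rw [← Finset.mul_sum]
    congr 1
    exact Finset.sum_congr rfl fun σ _ => (Complex.ofReal_prod _ _).symm
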